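/- The n-fold integral C_n := (4/n!) ∫_0^∞ ⋯ ∫_0^∞ (∑_{j=1}^n (u_j + u_j^{-1}))^{-2} du_1/u_1 ⋯ du_n/u_n equals the one-dimensional integral (2^n/n!) ∫_0^∞ t·K_0(t)^n dt, where K_0 is the modified Bessel function of the second kind of order 0. -/

import Mathlib

open MeasureTheory Real

open Set ENNReal

/-! ### Auxiliary lemmas -/

/-- One-dimensional change of variables for the Lebesgue (lower) integral. -/
theorem my_lintegral_image {s : Set ℝ} {f f' : ℝ → ℝ}
    (hs : MeasurableSet s) (hf' : ∀ x ∈ s, HasDerivWithinAt f (f' x) s x)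
    (hf : Set.InjOn f s) (g : ℝ → ENNReal) :
    ∫⁻ x in f '' s, g x = ∫⁻ x in s, ENNReal.ofReal |f' x| * g (f x) := by
  simpa only [ContinuousLinearMap.det_toSpanSingleton] using
    lintegral_image_eq_lintegral_abs_det_fderiv_mul volume hs
      (fun x hx => (hf' x hx).hasFDerivWithinAt) hf g

/-- Tonelli for a product of identical one-variable factors. -/
theorem my_lintegral_pow (n : ℕ) (f : ℝ → ENNReal) (hf : Measurable f) :
    ∫⁻ x : Fin n → ℝ, ∏ i, f (x i) = (∫⁻ x, f x) ^ n := by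
  induction n with
  | zero => simp [lintegral_const, volume_pi, Measure.pi_of_empty (fun _ : Fin 0 => volume)]
  | succ n ih =>
    have hmp := (measurePreserving_piFinSuccAbove (fun _ : Fin (n+1) => (volume : Measure ℝ)) 0)
    have hF : Measurable fun y : ℝ × (Fin n → ℝ) => f y.1 * ∏ j, f (y.2 j) := by
      apply Measurable.mul (hf.comp measurable_fst)
      exact (Finset.measurable_prod Finset.univ fun j _ =>
        (hf.comp ((measurable_pi_apply j).comp measurable_snd)))
    calc ∫⁻ x : Fin (n+1) → ℝ, ∏ i, f (x i)
        = ∫⁻ x : Fin (n+1) → ℝ, f (x 0) * ∏ j : Fin n, f (x ((0:Fin (n+1)).succAbove j)) := by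
          simp_rw [Fin.prod_univ_succ, Fin.zero_succAbove]
      _ = ∫⁻ y : ℝ × (Fin n → ℝ), f y.1 * ∏ j, f (y.2 j)
            ∂((volume : Measure ℝ).prod (Measure.pi fun _ => volume)) := by
          rw [volume_pi, ← hmp.lintegral_comp hF]
          rfl
      _ = (∫⁻ x, f x) * ∫⁻ x : Fin n → ℝ, ∏ j, f (x j) := by
          have hg : Measurable fun x : Fin n → ℝ => ∏ j : Fin n, f (x j) :=
            Finset.measurable_prod _ fun j _ => hf.comp (measurable_pi_apply j)
          rw [lintegral_prod_mul hf.aemeasurable hg.aemeasurable, ← volume_pi]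
      _ = (∫⁻ x, f x) ^ (n+1) := by rw [ih, pow_succ, mul_comm]

/-- `∫₀^∞ t e^{-tx} dt = x⁻²`. -/
theorem my_inv_sq {x : ℝ} (hx : 0 < x) :
    ∫⁻ t in Set.Ioi (0:ℝ), ENNReal.ofReal (t * Real.exp (-(t * x))) =
      ENNReal.ofReal ((x ^ 2)⁻¹) := by
  have hint : IntegrableOn (fun t : ℝ => t * Real.exp (-(t * x))) (Set.Ioi 0) := by
    have := integrableOn_rpow_mul_exp_neg_mul_rpow (p := 1) (s := 1) (b := x)
      (by norm_num) (by norm_num) hx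
    simpa [Real.rpow_one, mul_comm] using this
  have hval : ∫ t in Set.Ioi (0:ℝ), t * Real.exp (-(t * x)) = (x ^ 2)⁻¹ := by
    have := integral_rpow_mul_exp_neg_mul_Ioi (a := 2) (r := x) (by norm_num) hx
    have h2 : ∀ t : ℝ, t ^ ((2:ℝ) - 1) = t := by
      intro t; norm_num
    simp_rw [h2, mul_comm x] at this
    rw [this, Real.Gamma_two, mul_one, one_div,
      show ((2:ℝ)) = ((2:ℕ):ℝ) by norm_cast, Real.rpow_natCast, inv_pow]
  rw [← MeasureTheory.ofReal_integral_eq_lintegral_ofReal hint.integrable, hval]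
  · filter_upwards [ae_restrict_mem measurableSet_Ioi] with t ht
    exact mul_nonneg (le_of_lt ht) (Real.exp_pos _).le

/-- Unfolding an even function's integral over `ℝ` as twice the integral over `(0, ∞)`. -/
theorem my_neg_half (f : ℝ → ENNReal) (hsym : ∀ x, f (-x) = f x) :
    ∫⁻ x, f x = 2 * ∫⁻ x in Set.Ioi (0:ℝ), f x := by
  have himg : (fun x : ℝ => -x) '' Set.Ioi 0 = Set.Iio 0 := by
    ext x
    constructor
    · rintro ⟨y, hy, rfl⟩; simpa using hy
    · intro hx; exact ⟨-x, by simpa using hx, by ring⟩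
  have h1 : ∫⁻ x in Set.Iio (0:ℝ), f x = ∫⁻ x in Set.Ioi 0, f x := by
    rw [← himg, my_lintegral_image measurableSet_Ioi
      (fun x _ => (hasDerivAt_neg x).hasDerivWithinAt) (neg_injective.injOn) f]
    simp [hsym]
  have h2 : ∫⁻ x in Set.Ici (0:ℝ), f x = ∫⁻ x in Set.Ioi 0, f x := by
    rw [Measure.restrict_congr_set Ioi_ae_eq_Ici.symm]
  rw [← lintegral_add_compl f measurableSet_Iio, compl_Iio, h1, h2, two_mul]

/-- The substitution `u = e^v` converting `∫₀^∞ e^{-t(u+1/u)} du/u` into `2·K₀(2t)`. -/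
theorem my_subst {t : ℝ} (ht : 0 < t) :
    ∫⁻ u in Set.Ioi (0:ℝ), ENNReal.ofReal (Real.exp (-(t * (u + u⁻¹))) * u⁻¹) =
      2 * ∫⁻ v in Set.Ioi (0:ℝ), ENNReal.ofReal (Real.exp (-(2*t) * Real.cosh v)) := by
  have h1 : Set.Ioi (0:ℝ) = Real.exp '' Set.univ := by
    rw [Set.image_univ, Real.range_exp]
  conv_lhs => rw [h1, my_lintegral_image MeasurableSet.univ
    (fun x _ => (Real.hasDerivAt_exp x).hasDerivWithinAt) (Real.exp_injective.injOn),
    Measure.restrict_univ]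
  have key : ∀ x : ℝ, ENNReal.ofReal |Real.exp x| *
      ENNReal.ofReal (Real.exp (-(t * (Real.exp x + (Real.exp x)⁻¹))) * (Real.exp x)⁻¹) =
      ENNReal.ofReal (Real.exp (-(2*t) * Real.cosh x)) := by
    intro x
    rw [abs_of_pos (Real.exp_pos x), ← ENNReal.ofReal_mul (Real.exp_pos x).le]
    congr 1
    have hne := Real.exp_ne_zero x
    have harg : -(t * (Real.exp x + (Real.exp x)⁻¹)) = -(2*t) * Real.cosh x := by
      rw [Real.cosh_eq, Real.exp_neg]
      ring
    rw [harg]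
    field_simp
  simp_rw [key]
  exact my_neg_half (fun x => ENNReal.ofReal (Real.exp (-(2*t) * Real.cosh x)))
    (fun x => by simp [Real.cosh_neg])

/-- Modified Bessel function of the second kind of order zero. -/
noncomputable def K0 (t : ℝ) : ℝ := ∫ u in Set.Ioi (0:ℝ), Real.exp (-t * Real.cosh u)

theorem K0_integrableOn {t : ℝ} (ht : 0 < t) :
    IntegrableOn (fun u => Real.exp (-t * Real.cosh u)) (Set.Ioi 0) := by
  have hg : IntegrableOn (fun u : ℝ => Real.exp (-(t/2)) * Real.exp (-(t/2) * u))
      (Set.Ioi 0) := (exp_neg_integrableOn_Ioi 0 (half_pos ht)).const_mul _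
  refine hg.integrable.mono ?_ ?_
  · exact (Continuous.aestronglyMeasurable (by fun_prop) :
      AEStronglyMeasurable (fun u : ℝ => Real.exp (-t * Real.cosh u)) _)
  · filter_upwards [ae_restrict_mem measurableSet_Ioi] with u hu
    rw [Real.norm_eq_abs, Real.norm_eq_abs, abs_of_pos (Real.exp_pos _),
      abs_of_pos (by positivity), ← Real.exp_add, Real.exp_le_exp, Real.cosh_eq]
    have h1 := Real.add_one_le_exp u
    have h2 := (Real.exp_pos (-u)).le
    have hu' : (0:ℝ) < u := hu
    nlinarith

theorem K0_nonneg (t : ℝ) : 0 ≤ K0 t :=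
  integral_nonneg fun _ => (Real.exp_pos _).le

theorem K0_ofReal {t : ℝ} (ht : 0 < t) :
    ENNReal.ofReal (K0 t) =
      ∫⁻ u in Set.Ioi (0:ℝ), ENNReal.ofReal (Real.exp (-t * Real.cosh u)) :=
  MeasureTheory.ofReal_integral_eq_lintegral_ofReal (K0_integrableOn ht)
    (Filter.Eventually.of_forall fun _ => (Real.exp_pos _).le)

theorem K0_stronglyMeasurable : StronglyMeasurable K0 := by
  have h : StronglyMeasurable
      (fun t : ℝ => ∫ u in Set.Ioi (0:ℝ), Real.exp (-t * Real.cosh u)) := by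
    apply MeasureTheory.StronglyMeasurable.integral_prod_right
      (f := fun t u : ℝ => Real.exp (-t * Real.cosh u))
    exact (Continuous.stronglyMeasurable (by fun_prop) :
      StronglyMeasurable (fun p : ℝ × ℝ => Real.exp (-p.1 * Real.cosh p.2)))
  exact h

theorem hmeas_h {t : ℝ} :
    Measurable fun u : ℝ => ENNReal.ofReal (Real.exp (-(t * (u + u⁻¹))) * u⁻¹) := by
  apply ENNReal.measurable_ofReal.comp
  exact (Real.measurable_exp.comp
    (((measurable_id.add measurable_inv).const_mul t).neg)).mul measurable_inv

/-- Factorization of the inner multiple integral for a fixed `t > 0`. -/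
theorem M1 (n : ℕ) {t : ℝ} (ht : 0 < t) :
    ∫⁻ x : (Fin n → ℝ) in (Set.univ.pi fun _ : Fin n => Set.Ioi (0:ℝ)),
      ENNReal.ofReal (t * Real.exp (-(t * ∑ j, (x j + (x j)⁻¹))) * ∏ i, (x i)⁻¹)
      = ENNReal.ofReal t *
        (∫⁻ u in Set.Ioi (0:ℝ), ENNReal.ofReal (Real.exp (-(t * (u + u⁻¹))) * u⁻¹)) ^ n := by
  classical
  set A := Set.univ.pi fun _ : Fin n => Set.Ioi (0:ℝ) with hAdef
  have hA : MeasurableSet A := MeasurableSet.univ_pi fun _ => measurableSet_Ioi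
  set h : ℝ → ENNReal := fun u => ENNReal.ofReal (Real.exp (-(t * (u + u⁻¹))) * u⁻¹) with hh
  have hmeas : Measurable h := hmeas_h
  have step1 : ∀ x : Fin n → ℝ, x ∈ A →
      ENNReal.ofReal (t * Real.exp (-(t * ∑ j, (x j + (x j)⁻¹))) * ∏ i, (x i)⁻¹)
        = ENNReal.ofReal t * ∏ i, h (x i) := by
    intro x hx
    have hxi : ∀ i, 0 < x i := fun i => hx i (Set.mem_univ i)
    have hexp : Real.exp (-(t * ∑ j, (x j + (x j)⁻¹)))
        = ∏ j, Real.exp (-(t * (x j + (x j)⁻¹))) := by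
      rw [← Real.exp_sum]
      congr 1
      rw [Finset.mul_sum, ← Finset.sum_neg_distrib]
    rw [hexp, mul_assoc, ← Finset.prod_mul_distrib]
    rw [ENNReal.ofReal_mul ht.le]
    congr 1
    rw [ENNReal.ofReal_prod_of_nonneg]
    intro i _
    exact mul_nonneg (Real.exp_pos _).le (inv_nonneg.2 (hxi i).le)
  calc ∫⁻ x : Fin n → ℝ in A,
        ENNReal.ofReal (t * Real.exp (-(t * ∑ j, (x j + (x j)⁻¹))) * ∏ i, (x i)⁻¹)
      = ∫⁻ x : Fin n → ℝ in A, ENNReal.ofReal t * ∏ i, h (x i) := by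
        refine setLIntegral_congr_fun hA (fun x hx => step1 x hx)
    _ = ENNReal.ofReal t * ∫⁻ x : Fin n → ℝ in A, ∏ i, h (x i) :=
        lintegral_const_mul' _ _ ENNReal.ofReal_ne_top
    _ = ENNReal.ofReal t * ∫⁻ x : Fin n → ℝ, ∏ i, (Set.Ioi (0:ℝ)).indicator h (x i) := by
        rw [← lintegral_indicator hA]
        refine congrArg _ (lintegral_congr fun x => ?_)
        by_cases hx : x ∈ A
        · rw [Set.indicator_of_mem hx]
          exact Finset.prod_congr rfl fun i _ =>
            (Set.indicator_of_mem (hx i (Set.mem_univ i)) h).symm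
        · rw [Set.indicator_of_notMem hx]
          obtain ⟨i, hi⟩ : ∃ i, x i ∉ Set.Ioi (0:ℝ) := by
            by_contra hcon
            push_neg at hcon
            exact hx fun i _ => hcon i
          exact (Finset.prod_eq_zero (Finset.mem_univ i)
            (by rw [Set.indicator_of_notMem hi])).symm
    _ = ENNReal.ofReal t *
        (∫⁻ u in Set.Ioi (0:ℝ), ENNReal.ofReal (Real.exp (-(t * (u + u⁻¹))) * u⁻¹)) ^ n := by
        rw [my_lintegral_pow _ _ (hmeas.indicator measurableSet_Ioi),
          lintegral_indicator measurableSet_Ioi]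

/-- Interchange of the `t`-integral with the multiple integral. -/
theorem M2 (n : ℕ) (hn : 1 ≤ n) :
    ∫⁻ x : (Fin n → ℝ) in (Set.univ.pi fun _ : Fin n => Set.Ioi (0:ℝ)),
      ENNReal.ofReal (((∑ j, (x j + (x j)⁻¹)) ^ 2)⁻¹ * (∏ j, x j)⁻¹)
      = ∫⁻ t in Set.Ioi (0:ℝ), ENNReal.ofReal t *
          (∫⁻ u in Set.Ioi (0:ℝ), ENNReal.ofReal (Real.exp (-(t * (u + u⁻¹))) * u⁻¹)) ^ n := by
  classical
  set A := Set.univ.pi fun _ : Fin n => Set.Ioi (0:ℝ) with hAdef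
  have hA : MeasurableSet A := MeasurableSet.univ_pi fun _ => measurableSet_Ioi
  set F : (Fin n → ℝ) → ℝ → ENNReal := fun x t =>
    ENNReal.ofReal (t * Real.exp (-(t * ∑ j, (x j + (x j)⁻¹))) * ∏ i, (x i)⁻¹) with hF
  have step1 : ∀ x ∈ A, ENNReal.ofReal (((∑ j, (x j + (x j)⁻¹)) ^ 2)⁻¹ * (∏ j, x j)⁻¹)
      = ∫⁻ t in Set.Ioi (0:ℝ), F x t := by
    intro x hx
    have hxi : ∀ i, 0 < x i := fun i => hx i (Set.mem_univ i)
    have hS : 0 < ∑ j, (x j + (x j)⁻¹) := by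
      have : Nonempty (Fin n) := ⟨⟨0, hn⟩⟩
      exact Finset.sum_pos (fun j _ => add_pos (hxi j) (inv_pos.2 (hxi j))) Finset.univ_nonempty
    rw [ENNReal.ofReal_mul (inv_nonneg.2 (sq_nonneg _)), ← my_inv_sq hS,
      ← lintegral_mul_const' (ENNReal.ofReal ((∏ j, x j)⁻¹)) _ ENNReal.ofReal_ne_top]
    refine setLIntegral_congr_fun measurableSet_Ioi
      (fun t ht => ?_)
    rw [← ENNReal.ofReal_mul (mul_nonneg (le_of_lt ht) (Real.exp_pos _).le)]
    rw [hF]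
    congr 1
    rw [← Finset.prod_inv_distrib]
  have hFmeas : Measurable (Function.uncurry F) := by
    have mS : Measurable fun p : (Fin n → ℝ) × ℝ => ∑ j, (p.1 j + (p.1 j)⁻¹) :=
      Finset.measurable_sum _ fun j _ =>
        (((measurable_pi_apply j).comp measurable_fst).add
          ((measurable_pi_apply j).comp measurable_fst).inv)
    have mP : Measurable fun p : (Fin n → ℝ) × ℝ => ∏ i, (p.1 i)⁻¹ :=
      Finset.measurable_prod _ fun i _ => ((measurable_pi_apply i).comp measurable_fst).inv
    exact ENNReal.measurable_ofReal.comp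
      ((measurable_snd.mul (Real.measurable_exp.comp ((measurable_snd.mul mS).neg))).mul mP)
  calc ∫⁻ x : (Fin n → ℝ) in A,
        ENNReal.ofReal (((∑ j, (x j + (x j)⁻¹)) ^ 2)⁻¹ * (∏ j, x j)⁻¹)
      = ∫⁻ x : (Fin n → ℝ) in A, ∫⁻ t in Set.Ioi (0:ℝ), F x t :=
        setLIntegral_congr_fun hA (fun x hx => step1 x hx)
    _ = ∫⁻ t in Set.Ioi (0:ℝ), ∫⁻ x : (Fin n → ℝ) in A, F x t :=
        lintegral_lintegral_swap hFmeas.aemeasurable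
    _ = ∫⁻ t in Set.Ioi (0:ℝ), ENNReal.ofReal t *
          (∫⁻ u in Set.Ioi (0:ℝ), ENNReal.ofReal (Real.exp (-(t * (u + u⁻¹))) * u⁻¹)) ^ n := by
        refine setLIntegral_congr_fun measurableSet_Ioi
          (fun t ht => ?_)
        exact M1 n ht

/-- Rescaling `t ↦ 2t` in the one-dimensional integral. -/
theorem M4 (n : ℕ) :
    ∫⁻ s in Set.Ioi (0:ℝ), ENNReal.ofReal s *
        (∫⁻ u in Set.Ioi (0:ℝ), ENNReal.ofReal (Real.exp (-s * Real.cosh u))) ^ n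
      = 4 * ∫⁻ t in Set.Ioi (0:ℝ), ENNReal.ofReal t *
        (∫⁻ u in Set.Ioi (0:ℝ), ENNReal.ofReal (Real.exp (-(2*t) * Real.cosh u))) ^ n := by
  set L : ℝ → ENNReal :=
    fun s => ∫⁻ u in Set.Ioi (0:ℝ), ENNReal.ofReal (Real.exp (-s * Real.cosh u)) with hL
  have himg : (fun t : ℝ => 2 * t) '' Set.Ioi 0 = Set.Ioi 0 :=
    Set.image_const_mul_Ioi_zero two_pos
  have hderiv : ∀ x ∈ Set.Ioi (0:ℝ),
      HasDerivWithinAt (fun t : ℝ => 2 * t) 2 (Set.Ioi 0) x := fun x _ => by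
    simpa using ((hasDerivAt_id x).const_mul (2:ℝ)).hasDerivWithinAt
  have himage := my_lintegral_image measurableSet_Ioi hderiv
    ((mul_right_injective₀ two_ne_zero).injOn)
    (fun s => ENNReal.ofReal s * (L s) ^ n)
  rw [himg] at himage
  refine himage.trans ?_
  have key : ∀ x : ℝ, ENNReal.ofReal |(2:ℝ)| * (ENNReal.ofReal (2 * x) * (L (2 * x)) ^ n)
      = 4 * (ENNReal.ofReal x * (L (2 * x)) ^ n) := by
    intro x
    rw [abs_of_pos two_pos, ← mul_assoc, ← ENNReal.ofReal_mul two_pos.le,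
      show (2:ℝ) * (2 * x) = 4 * x by ring,
      ENNReal.ofReal_mul (by norm_num : (0:ℝ) ≤ 4), ENNReal.ofReal_ofNat, mul_assoc]
  rw [← lintegral_const_mul' 4 _ (by simp)]
  exact lintegral_congr fun x => key x

theorem Cn_multiple_integral_eq_one_dim (n : ℕ) (hn : 1 ≤ n) :
    (4 / n.factorial : ℝ) *
      ∫ u in Set.univ.pi (fun _ : Fin n => Set.Ioi (0:ℝ)),
        ((∑ j, (u j + (u j)⁻¹))^2)⁻¹ * (∏ j, u j)⁻¹ =
    (2 ^ n / n.factorial : ℝ) * ∫ t in Set.Ioi (0:ℝ), t * K0 t ^ n := by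
  classical
  have hA : MeasurableSet (Set.univ.pi fun _ : Fin n => Set.Ioi (0:ℝ)) :=
    MeasurableSet.univ_pi fun _ => measurableSet_Ioi
  set L : ℝ → ENNReal :=
    fun s => ∫⁻ u in Set.Ioi (0:ℝ), ENNReal.ofReal (Real.exp (-s * Real.cosh u)) with hL
  set X := ∫⁻ t in Set.Ioi (0:ℝ), ENNReal.ofReal t * (L (2*t)) ^ n with hX
  -- left side
  have hLmeas : AEStronglyMeasurable
      (fun x : Fin n → ℝ => ((∑ j, (x j + (x j)⁻¹)) ^ 2)⁻¹ * (∏ j, x j)⁻¹)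
      (volume.restrict (Set.univ.pi fun _ : Fin n => Set.Ioi (0:ℝ))) := by
    have mS : Measurable fun x : Fin n → ℝ => ∑ j, (x j + (x j)⁻¹) :=
      Finset.measurable_sum _ fun j _ =>
        (measurable_pi_apply j).add (measurable_pi_apply j).inv
    have mP : Measurable fun x : Fin n → ℝ => (∏ j, x j)⁻¹ :=
      (Finset.measurable_prod _ fun j _ => measurable_pi_apply j).inv
    exact (((mS.pow_const 2).inv).mul mP).aestronglyMeasurable
  have hLnn : 0 ≤ᵐ[volume.restrict (Set.univ.pi fun _ : Fin n => Set.Ioi (0:ℝ))]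
      fun x : Fin n → ℝ => ((∑ j, (x j + (x j)⁻¹)) ^ 2)⁻¹ * (∏ j, x j)⁻¹ := by
    filter_upwards [ae_restrict_mem hA] with x hx
    have hxi : ∀ i, 0 < x i := fun i => hx i (Set.mem_univ i)
    have hp : 0 < ∏ j, x j := Finset.prod_pos fun j _ => hxi j
    exact mul_nonneg (inv_nonneg.2 (sq_nonneg _)) (inv_nonneg.2 hp.le)
  rw [integral_eq_lintegral_of_nonneg_ae hLnn hLmeas]
  -- the chain of identities for the left lintegral
  have hchain : ∫⁻ x : (Fin n → ℝ) in (Set.univ.pi fun _ : Fin n => Set.Ioi (0:ℝ)),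
      ENNReal.ofReal (((∑ j, (x j + (x j)⁻¹)) ^ 2)⁻¹ * (∏ j, x j)⁻¹) = 2 ^ n * X := by
    rw [M2 n hn, hX]
    rw [← lintegral_const_mul' (2 ^ n) _ (pow_ne_top ENNReal.ofNat_ne_top)]
    refine setLIntegral_congr_fun measurableSet_Ioi
      (fun t ht => ?_)
    rw [my_subst ht]
    have : L (2 * t) = ∫⁻ v in Set.Ioi (0:ℝ),
        ENNReal.ofReal (Real.exp (-(2*t) * Real.cosh v)) := rfl
    rw [← this, mul_pow]
    ring
  rw [hchain]
  -- right side
  have hRmeas : AEStronglyMeasurable (fun t : ℝ => t * K0 t ^ n)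
      (volume.restrict (Set.Ioi (0:ℝ))) :=
    (measurable_id.mul (K0_stronglyMeasurable.measurable.pow_const n)).aestronglyMeasurable
  have hRnn : 0 ≤ᵐ[volume.restrict (Set.Ioi (0:ℝ))] fun t : ℝ => t * K0 t ^ n := by
    filter_upwards [ae_restrict_mem measurableSet_Ioi] with t ht
    exact mul_nonneg (le_of_lt ht) (pow_nonneg (K0_nonneg t) n)
  rw [integral_eq_lintegral_of_nonneg_ae hRnn hRmeas]
  have hR : ∫⁻ t in Set.Ioi (0:ℝ), ENNReal.ofReal (t * K0 t ^ n) = 4 * X := by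
    have h1 : ∫⁻ t in Set.Ioi (0:ℝ), ENNReal.ofReal (t * K0 t ^ n)
        = ∫⁻ s in Set.Ioi (0:ℝ), ENNReal.ofReal s * (L s) ^ n := by
      refine setLIntegral_congr_fun measurableSet_Ioi
        (fun t ht => ?_)
      rw [ENNReal.ofReal_mul (le_of_lt ht), ENNReal.ofReal_pow (K0_nonneg t), K0_ofReal ht]
    rw [h1, hX]
    exact M4 n
  rw [hR]
  -- final arithmetic
  rw [ENNReal.toReal_mul, ENNReal.toReal_mul, ENNReal.toReal_pow, ENNReal.toReal_ofNat,
    ENNReal.toReal_ofNat]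
  ring
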